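/- arXiv:2404.10611 — 3 statements merged into one kernel-verified Lean document; each statement's English description precedes it below -/
import Mathlib

section
/- Let O ⊆ ℝ^d be open, let u : ℝ^d → ℝ be three times continuously differentiable on O, let σ > 0, and define y := u − σ L̄u on O. Then for every ε > 0 and every x ∈ O, φ_ε(x) · σ L̄φ_ε(x) ≥ φ(x)² − φ(x) ‖∇y(x)‖. -/
open Real MeasureTheory
open scoped BigOperators RealInnerProductSpace

/-- Partial derivative in the `i`-th coordinate direction. -/
noncomputable def pd {d : ℕ} (i : Fin d) (f : EuclideanSpace ℝ (Fin d) → ℝ)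
    (x : EuclideanSpace ℝ (Fin d)) : ℝ :=
  fderiv ℝ f x (EuclideanSpace.single i 1)

/-- The (Gaussian) Ornstein–Uhlenbeck operator `L̄f(x) = Δf(x) − ⟨x, ∇f(x)⟩`. -/
noncomputable def OU {d : ℕ} (f : EuclideanSpace ℝ (Fin d) → ℝ)
    (x : EuclideanSpace ℝ (Fin d)) : ℝ :=
  (∑ i, pd i (pd i f) x) - ⟪x, gradient f x⟫

/-- `φ(x) = ‖∇u(x)‖`. -/
noncomputable def phi {d : ℕ} (u : EuclideanSpace ℝ (Fin d) → ℝ)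
    (x : EuclideanSpace ℝ (Fin d)) : ℝ :=
  ‖gradient u x‖

/-- `φ_ε(x) = √(ε² + ‖∇u(x)‖²)`. -/
noncomputable def phiEps {d : ℕ} (ε : ℝ) (u : EuclideanSpace ℝ (Fin d) → ℝ)
    (x : EuclideanSpace ℝ (Fin d)) : ℝ :=
  Real.sqrt (ε ^ 2 + ‖gradient u x‖ ^ 2)

lemma pd_eq_fderiv {d : ℕ} (i : Fin d) (f : EuclideanSpace ℝ (Fin d) → ℝ) (x) :
    pd i f x = fderiv ℝ f x (EuclideanSpace.single i 1) := rfl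

lemma grad_coord {d : ℕ} (f : EuclideanSpace ℝ (Fin d) → ℝ) (x : EuclideanSpace ℝ (Fin d))
    (i : Fin d) : gradient f x i = pd i f x := by
  have h1 : (⟪EuclideanSpace.single i (1:ℝ), gradient f x⟫) = gradient f x i := by
    rw [EuclideanSpace.inner_single_left]; simp
  rw [← h1, real_inner_comm]
  show ⟪(InnerProductSpace.toDual ℝ _).symm (fderiv ℝ f x), _⟫ = _
  rw [InnerProductSpace.toDual_symm_apply]
  rfl

lemma norm_sq_eq {d : ℕ} (a : EuclideanSpace ℝ (Fin d)) : ‖a‖ ^ 2 = ∑ i, a i ^ 2 := by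
  rw [EuclideanSpace.norm_eq, Real.sq_sqrt (by positivity)]
  simp [sq_abs]

lemma inner_sum_eq {d : ℕ} (a b : EuclideanSpace ℝ (Fin d)) : ⟪a, b⟫ = ∑ i, a i * b i := by
  simp [PiLp.inner_apply]
  exact Finset.sum_congr rfl fun _ _ => mul_comm _ _

lemma pd_contDiffOn {d : ℕ} {n m : WithTop ℕ∞} {f : EuclideanSpace ℝ (Fin d) → ℝ}
    {O : Set (EuclideanSpace ℝ (Fin d))} (hO : IsOpen O) (hf : ContDiffOn ℝ m f O)
    (hnm : n + 1 ≤ m) (i : Fin d) : ContDiffOn ℝ n (pd i f) O := by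
  have h1 : ContDiffOn ℝ n (fderiv ℝ f) O := hf.fderiv_of_isOpen hO hnm
  exact h1.clm_apply contDiffOn_const

lemma diffAt' {d : ℕ} {f : EuclideanSpace ℝ (Fin d) → ℝ} {O : Set (EuclideanSpace ℝ (Fin d))}
    (hO : IsOpen O) (hf : ContDiffOn ℝ 1 f O) {x} (hx : x ∈ O) : DifferentiableAt ℝ f x :=
  (hf.contDiffAt (hO.mem_nhds hx)).differentiableAt one_ne_zero

lemma pd_comm {d : ℕ} {f : EuclideanSpace ℝ (Fin d) → ℝ} {O : Set (EuclideanSpace ℝ (Fin d))}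
    (hO : IsOpen O) (hf : ContDiffOn ℝ 2 f O) {x} (hx : x ∈ O) (i j : Fin d) :
    pd i (pd j f) x = pd j (pd i f) x := by
  have hat : ContDiffAt ℝ 2 f x := hf.contDiffAt (hO.mem_nhds hx)
  have hdf : DifferentiableAt ℝ (fderiv ℝ f) x :=
    (hat.fderiv_right (m := 1) (by norm_num)).differentiableAt one_ne_zero
  have key : ∀ a b : Fin d, pd a (pd b f) x
      = fderiv ℝ (fderiv ℝ f) x (EuclideanSpace.single a 1) (EuclideanSpace.single b 1) := by
    intro a b
    have h := hdf.hasFDerivAt.clm_apply (hasFDerivAt_const (EuclideanSpace.single b (1:ℝ)) x)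
    show fderiv ℝ (fun z => fderiv ℝ f z (EuclideanSpace.single b 1)) x
      (EuclideanSpace.single a 1) = _
    rw [h.fderiv]
    simp
  rw [key i j, key j i, (hat.isSymmSndFDerivAt (by simp [minSmoothness_of_isRCLikeNormedField])).eq]

set_option maxHeartbeats 1000000 in
theorem phiEps_ou_lower_bound {d : ℕ} (O : Set (EuclideanSpace ℝ (Fin d)))
    (hO : IsOpen O) (u : EuclideanSpace ℝ (Fin d) → ℝ) (hu : ContDiffOn ℝ 3 u O)
    (σ : ℝ) (hσ : 0 < σ) (y : EuclideanSpace ℝ (Fin d) → ℝ)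
    (hy : ∀ x ∈ O, y x = u x - σ * OU u x) (ε : ℝ) (hε : 0 < ε) :
    ∀ x ∈ O,
      phiEps ε u x * (σ * OU (phiEps ε u) x) ≥
        (phi u x) ^ 2 - phi u x * ‖gradient y x‖ := by
  intro x hx
  classical
  have hεne : ε ≠ 0 := ne_of_gt hε
  -- regularity
  have hu2 : ContDiffOn ℝ 2 u O := hu.of_le (by norm_num)
  have hu1CD : ∀ j, ContDiffOn ℝ 2 (pd j u) O := fun j =>
    pd_contDiffOn hO hu (by norm_num) j
  have hu2CD : ∀ i j, ContDiffOn ℝ 1 (pd i (pd j u)) O := fun i j =>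
    pd_contDiffOn hO (hu1CD j) (by norm_num) i
  have du1 : ∀ z ∈ O, ∀ j, DifferentiableAt ℝ (pd j u) z := fun z hz j =>
    diffAt' hO ((hu1CD j).of_le (by norm_num)) hz
  have du2 : ∀ z ∈ O, ∀ i j, DifferentiableAt ℝ (pd i (pd j u)) z := fun z hz i j =>
    diffAt' hO (hu2CD i j) hz
  -- global formula for phiEps
  have hphiEq : phiEps ε u = fun z => Real.sqrt (ε ^ 2 + ∑ j, pd j u z ^ 2) := by
    funext z
    rw [phiEps, norm_sq_eq]
    simp_rw [grad_coord]
  -- positivity facts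
  have hGpos : ∀ z : EuclideanSpace ℝ (Fin d), 0 < ε ^ 2 + ∑ j, pd j u z ^ 2 := by
    intro z
    have : (0:ℝ) ≤ ∑ j, pd j u z ^ 2 := Finset.sum_nonneg fun j _ => sq_nonneg _
    positivity
  have hSpos : ∀ z : EuclideanSpace ℝ (Fin d), 0 < Real.sqrt (ε ^ 2 + ∑ j, pd j u z ^ 2) :=
    fun z => Real.sqrt_pos.mpr (hGpos z)
  -- derivative of the inner function G
  have hGat : ∀ z ∈ O, HasFDerivAt (fun w => ε ^ 2 + ∑ j, pd j u w ^ 2)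
      (∑ j, ((pd j u z) • fderiv ℝ (pd j u) z + (pd j u z) • fderiv ℝ (pd j u) z)) z := by
    intro z hz
    have hsq : ∀ j : Fin d, HasFDerivAt (fun w => pd j u w ^ 2)
        ((pd j u z) • fderiv ℝ (pd j u) z + (pd j u z) • fderiv ℝ (pd j u) z) z := by
      intro j
      have h := (du1 z hz j).hasFDerivAt
      simpa [pow_two] using h.fun_mul h
    simpa using (hasFDerivAt_const (ε ^ 2) z).fun_add (HasFDerivAt.fun_sum fun j _ => hsq j)
  -- first derivative of phiEps
  have key1 : ∀ z ∈ O, HasFDerivAt (phiEps ε u)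
      ((1 / (2 * Real.sqrt (ε ^ 2 + ∑ j, pd j u z ^ 2))) •
        (∑ j, ((pd j u z) • fderiv ℝ (pd j u) z + (pd j u z) • fderiv ℝ (pd j u) z))) z := by
    intro z hz
    have h := (hGat z hz).sqrt (ne_of_gt (hGpos z))
    rw [hphiEq]
    exact h
  have hpdapp : ∀ (f : EuclideanSpace ℝ (Fin d) → ℝ) (z : EuclideanSpace ℝ (Fin d)) (i : Fin d),
      fderiv ℝ f z (EuclideanSpace.single i 1) = pd i f z := fun _ _ _ => rfl
  have key1' : ∀ z ∈ O, ∀ i, pd i (phiEps ε u) z =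
      (∑ j, pd j u z * pd i (pd j u) z) / Real.sqrt (ε ^ 2 + ∑ j, pd j u z ^ 2) := by
    intro z hz i
    rw [pd_eq_fderiv, (key1 z hz).fderiv]
    simp only [ContinuousLinearMap.smul_apply, ContinuousLinearMap.sum_apply,
      ContinuousLinearMap.add_apply, ContinuousLinearMap.coe_smul', Pi.smul_apply,
      smul_eq_mul]
    simp_rw [hpdapp]
    have hS := ne_of_gt (hSpos z)
    simp_rw [← two_mul]
    rw [← Finset.mul_sum]
    field_simp
  -- second derivative of phiEps at x
  have key2 : ∀ i : Fin d, pd i (pd i (phiEps ε u)) x =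
      (∑ j, (pd j u x * pd i (pd i (pd j u)) x + pd i (pd j u) x * pd i (pd j u) x)) /
        Real.sqrt (ε ^ 2 + ∑ j, pd j u x ^ 2)
      - (∑ j, pd j u x * pd i (pd j u) x) ^ 2 / (Real.sqrt (ε ^ 2 + ∑ j, pd j u x ^ 2)) ^ 3 := by
    intro i
    have hev : (pd i (phiEps ε u)) =ᶠ[nhds x] fun z =>
        (∑ j, pd j u z * pd i (pd j u) z) * (Real.sqrt (ε ^ 2 + ∑ j, pd j u z ^ 2))⁻¹ := by
      filter_upwards [hO.mem_nhds hx] with z hz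
      rw [key1' z hz i, div_eq_mul_inv]
    have hDN : HasFDerivAt (fun z => ∑ j, pd j u z * pd i (pd j u) z)
        (∑ j, ((pd j u x) • fderiv ℝ (pd i (pd j u)) x
          + (pd i (pd j u) x) • fderiv ℝ (pd j u) x)) x :=
      HasFDerivAt.fun_sum fun j _ => ((du1 x hx j).hasFDerivAt.mul (du2 x hx i j).hasFDerivAt)
    have hDS : HasFDerivAt (fun z => Real.sqrt (ε ^ 2 + ∑ j, pd j u z ^ 2))
        ((1 / (2 * Real.sqrt (ε ^ 2 + ∑ j, pd j u x ^ 2))) •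
          (∑ j, ((pd j u x) • fderiv ℝ (pd j u) x + (pd j u x) • fderiv ℝ (pd j u) x))) x :=
      (hGat x hx).sqrt (ne_of_gt (hGpos x))
    have hDSinv : HasFDerivAt (fun z => (Real.sqrt (ε ^ 2 + ∑ j, pd j u z ^ 2))⁻¹)
        ((-((Real.sqrt (ε ^ 2 + ∑ j, pd j u x ^ 2)) ^ 2)⁻¹) •
          ((1 / (2 * Real.sqrt (ε ^ 2 + ∑ j, pd j u x ^ 2))) •
            (∑ j, ((pd j u x) • fderiv ℝ (pd j u) x + (pd j u x) • fderiv ℝ (pd j u) x)))) x :=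
      (hasDerivAt_inv (ne_of_gt (hSpos x))).comp_hasFDerivAt x hDS
    have hDP : HasFDerivAt (fun z => (∑ j, pd j u z * pd i (pd j u) z)
          * (Real.sqrt (ε ^ 2 + ∑ j, pd j u z ^ 2))⁻¹)
        ((∑ j, pd j u x * pd i (pd j u) x) •
            ((-((Real.sqrt (ε ^ 2 + ∑ j, pd j u x ^ 2)) ^ 2)⁻¹) •
              ((1 / (2 * Real.sqrt (ε ^ 2 + ∑ j, pd j u x ^ 2))) •
                (∑ j, ((pd j u x) • fderiv ℝ (pd j u) x + (pd j u x) • fderiv ℝ (pd j u) x))))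
          + (Real.sqrt (ε ^ 2 + ∑ j, pd j u x ^ 2))⁻¹ •
            (∑ j, ((pd j u x) • fderiv ℝ (pd i (pd j u)) x
              + (pd i (pd j u) x) • fderiv ℝ (pd j u) x))) x := hDN.mul hDSinv
    rw [pd_eq_fderiv, hev.fderiv_eq, hDP.fderiv]
    simp only [ContinuousLinearMap.add_apply, ContinuousLinearMap.smul_apply,
      ContinuousLinearMap.sum_apply, smul_eq_mul]
    simp_rw [hpdapp]
    have hS := ne_of_gt (hSpos x)
    have h2m : ∀ a : ℝ, a + a = 2 * a := fun a => (two_mul a).symm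
    simp_rw [h2m, ← Finset.mul_sum]
    generalize hSg : Real.sqrt (ε ^ 2 + ∑ j, pd j u x ^ 2) = S at hS ⊢
    field_simp
    ring
  -- symmetry facts
  have hHsymm : ∀ i j : Fin d, pd i (pd j u) x = pd j (pd i u) x := fun i j =>
    pd_comm hO hu2 hx i j
  have hTsymm : ∀ i j : Fin d, pd j (pd i (pd i u)) x = pd i (pd i (pd j u)) x := by
    intro i j
    have h1 : pd j (pd i (pd i u)) x = pd i (pd j (pd i u)) x := pd_comm hO (hu1CD i) hx j i
    have hev : (pd j (pd i u)) =ᶠ[nhds x] (pd i (pd j u)) := by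
      filter_upwards [hO.mem_nhds hx] with z hz
      exact pd_comm hO hu2 hz j i
    have h2 : pd i (pd j (pd i u)) x = pd i (pd i (pd j u)) x := by
      rw [pd_eq_fderiv, pd_eq_fderiv, hev.fderiv_eq]
    rw [h1, h2]
  -- gradient of y
  have hyEv : y =ᶠ[nhds x] fun z => u z
      - σ * ((∑ i, pd i (pd i u) z) - ∑ i, z i * pd i u z) := by
    filter_upwards [hO.mem_nhds hx] with z hz
    rw [hy z hz, OU, inner_sum_eq]
    simp_rw [grad_coord]
  have huD : HasFDerivAt u (fderiv ℝ u x) x :=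
    (diffAt' hO (hu.of_le (by norm_num)) hx).hasFDerivAt
  have hyD : HasFDerivAt (fun z => u z - σ * ((∑ i, pd i (pd i u) z) - ∑ i, z i * pd i u z))
      (fderiv ℝ u x - σ • ((∑ i, fderiv ℝ (pd i (pd i u)) x)
        - ∑ i, ((x i) • fderiv ℝ (pd i u) x + (pd i u x) •
          (EuclideanSpace.proj i : EuclideanSpace ℝ (Fin d) →L[ℝ] ℝ)))) x := by
    have hsum1 : HasFDerivAt (fun z => ∑ i, pd i (pd i u) z)
        (∑ i, fderiv ℝ (pd i (pd i u)) x) x :=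
      HasFDerivAt.fun_sum fun i _ => (du2 x hx i i).hasFDerivAt
    have hsum2 : HasFDerivAt (fun z : EuclideanSpace ℝ (Fin d) => ∑ i, z i * pd i u z)
        (∑ i, ((x i) • fderiv ℝ (pd i u) x + (pd i u x) •
          (EuclideanSpace.proj i : EuclideanSpace ℝ (Fin d) →L[ℝ] ℝ))) x := by
      refine HasFDerivAt.fun_sum fun i _ => ?_
      exact ((EuclideanSpace.proj i).hasFDerivAt).mul (du1 x hx i).hasFDerivAt
    exact huD.sub ((hsum1.sub hsum2).const_mul σ)
  have hgrady : ∀ j, gradient y x j = pd j u x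
      - σ * ((∑ i, pd j (pd i (pd i u)) x) - (pd j u x + ∑ i, x i * pd j (pd i u) x)) := by
    intro j
    rw [grad_coord, pd_eq_fderiv, hyEv.fderiv_eq, hyD.fderiv]
    simp only [ContinuousLinearMap.sub_apply, ContinuousLinearMap.smul_apply,
      ContinuousLinearMap.sum_apply, ContinuousLinearMap.add_apply, smul_eq_mul]
    simp_rw [hpdapp]
    rw [Finset.sum_add_distrib]
    have hproj : ∑ i, pd i u x *
        ((EuclideanSpace.proj i : EuclideanSpace ℝ (Fin d) →L[ℝ] ℝ)
          (EuclideanSpace.single j 1)) = pd j u x := by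
      simp [EuclideanSpace.single_apply]
    rw [hproj]
    ring
  -- abbreviations
  set P := ∑ j, pd j u x ^ 2 with hPdef
  set A := ∑ i : Fin d, ∑ j, pd i (pd j u) x ^ 2 with hAdef
  set W := ∑ i : Fin d, ∑ j, pd j u x * pd i (pd i (pd j u)) x with hWdef
  set SQ := ∑ i : Fin d, (∑ j, pd j u x * pd i (pd j u) x) ^ 2 with hSQdef
  set R := ∑ i : Fin d, x i * ∑ j, pd j u x * pd i (pd j u) x with hRdef
  set S0 := Real.sqrt (ε ^ 2 + P) with hS0def
  have hS0pos : 0 < S0 := hSpos x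
  have hS0ne : S0 ≠ 0 := ne_of_gt hS0pos
  have hS0sq : S0 ^ 2 = ε ^ 2 + P := Real.sq_sqrt (le_of_lt (hGpos x))
  -- Laplacian of phiEps
  have hLap : ∑ i, pd i (pd i (phiEps ε u)) x = (W + A) / S0 - SQ / S0 ^ 3 := by
    rw [Finset.sum_congr rfl fun i _ => key2 i, Finset.sum_sub_distrib,
      ← Finset.sum_div, ← Finset.sum_div]
    congr 2
    rw [← Finset.sum_add_distrib]
    refine Finset.sum_congr rfl fun i _ => ?_
    rw [Finset.sum_add_distrib]
    congr 1
    exact Finset.sum_congr rfl fun j _ => (pow_two _).symm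
  -- OU of phiEps
  have hOUphi : OU (phiEps ε u) x = ((W + A) / S0 - SQ / S0 ^ 3) - R / S0 := by
    rw [OU, hLap, inner_sum_eq]
    congr 1
    have hterm : ∀ i, x i * gradient (phiEps ε u) x i
        = (x i * ∑ j, pd j u x * pd i (pd j u) x) / S0 := by
      intro i
      rw [grad_coord, key1' x hx i, ← hPdef, ← hS0def, mul_div_assoc]
    rw [Finset.sum_congr rfl fun i _ => hterm i, ← Finset.sum_div]
  -- inner product of gradients
  have hIY : ⟪gradient u x, gradient y x⟫ = P - σ * (W - P - R) := by
    rw [inner_sum_eq]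
    have hterm : ∀ j, gradient u x j * gradient y x j =
        pd j u x ^ 2 - σ * ((∑ i, pd j u x * pd i (pd i (pd j u)) x)
          - (pd j u x ^ 2 + ∑ i, x i * (pd j u x * pd i (pd j u) x))) := by
      intro j
      rw [grad_coord, hgrady j]
      have e1 : pd j u x * ∑ i, pd j (pd i (pd i u)) x
          = ∑ i, pd j u x * pd i (pd i (pd j u)) x := by
        rw [Finset.mul_sum]
        exact Finset.sum_congr rfl fun i _ => by rw [hTsymm i j]
      have e2 : pd j u x * ∑ i, x i * pd j (pd i u) x
          = ∑ i, x i * (pd j u x * pd i (pd j u) x) := by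
        rw [Finset.mul_sum]
        refine Finset.sum_congr rfl fun i _ => ?_
        rw [hHsymm i j]
        ring
      calc pd j u x * (pd j u x - σ * ((∑ i, pd j (pd i (pd i u)) x)
            - (pd j u x + ∑ i, x i * pd j (pd i u) x)))
          = pd j u x ^ 2 - σ * ((pd j u x * ∑ i, pd j (pd i (pd i u)) x)
            - (pd j u x ^ 2 + pd j u x * ∑ i, x i * pd j (pd i u) x)) := by ring
        _ = _ := by rw [e1, e2]
    rw [Finset.sum_congr rfl fun j _ => hterm j, Finset.sum_sub_distrib, ← Finset.mul_sum,
      Finset.sum_sub_distrib, Finset.sum_add_distrib]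
    have eW : ∑ j, ∑ i, pd j u x * pd i (pd i (pd j u)) x = W := Finset.sum_comm
    have eR : ∑ j, ∑ i, x i * (pd j u x * pd i (pd j u) x) = R := by
      rw [Finset.sum_comm]
      exact Finset.sum_congr rfl fun i _ => by rw [← Finset.mul_sum]
    rw [eW, eR]
    ring
  -- the value of phiEps and phi at x
  have hphix : phiEps ε u x = S0 := by
    rw [hphiEq]
  have hphiP : phi u x ^ 2 = P := by
    rw [phi, norm_sq_eq]
    exact Finset.sum_congr rfl fun j _ => by rw [grad_coord]
  -- inequalities
  have hPnn : (0:ℝ) ≤ P := Finset.sum_nonneg fun j _ => sq_nonneg _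
  have hPle : P ≤ S0 ^ 2 := by nlinarith [sq_nonneg ε]
  have hAnn : (0:ℝ) ≤ A :=
    Finset.sum_nonneg fun i _ => Finset.sum_nonneg fun j _ => sq_nonneg _
  have hSQle : SQ ≤ P * A := by
    rw [hSQdef, hAdef, Finset.mul_sum]
    refine Finset.sum_le_sum fun i _ => ?_
    exact Finset.sum_mul_sq_le_sq_mul_sq Finset.univ (fun j => pd j u x)
      (fun j => pd i (pd j u) x)
  have hdivle : SQ / S0 ^ 2 ≤ A := by
    rw [div_le_iff₀ (by positivity)]
    nlinarith [mul_le_mul_of_nonneg_right hPle hAnn]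
  have hCS : ⟪gradient u x, gradient y x⟫ ≤ phi u x * ‖gradient y x‖ :=
    real_inner_le_norm _ _
  -- final computation
  have hLHS : phiEps ε u x * (σ * OU (phiEps ε u) x)
      = σ * (A - SQ / S0 ^ 2) + σ * (W - R) := by
    rw [hphix, hOUphi]
    field_simp
    ring
  rw [ge_iff_le, hLHS, hphiP]
  have hWR : σ * (W - R) = P + σ * P - ⟪gradient u x, gradient y x⟫ := by
    rw [hIY]; ring
  rw [hWR]
  have h0 : 0 ≤ σ * (A - SQ / S0 ^ 2) := mul_nonneg (le_of_lt hσ) (by linarith)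
  have h1 : 0 ≤ σ * P := mul_nonneg (le_of_lt hσ) hPnn
  linarith
end

section
/- Let O ⊆ ℝ^d be open, let u : ℝ^d → ℝ be three times continuously differentiable on O, let σ > 0, define y := u − σ L̄u on O, and let ε > 0. Let g : [0,∞) → ℝ be twice continuously differentiable, convex, and nondecreasing. Then for every x ∈ O, σ L̄(g ∘ φ_ε)(x) ≥ g'(φ_ε(x)) (φ(x)²/φ_ε(x) − ‖∇y(x)‖). -/
open Real MeasureTheory
open scoped BigOperators RealInnerProductSpace

variable {d : ℕ}

local notation "E" => EuclideanSpace ℝ (Fin d)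

lemma grad_inner (f : E → ℝ) (x w : E) : ⟪gradient f x, w⟫ = fderiv ℝ f x w :=
  InnerProductSpace.toDual_symm_apply

lemma inner_grad (f : E → ℝ) (x w : E) : ⟪w, gradient f x⟫ = fderiv ℝ f x w := by
  rw [real_inner_comm]; exact grad_inner f x w

lemma grad_coord_s9 (f : E → ℝ) (x : E) (j : Fin d) :
    gradient f x j = fderiv ℝ f x (EuclideanSpace.single j 1) := by
  rw [← grad_inner f x, EuclideanSpace.inner_single_right]
  simp

lemma euclid_norm_sq (w : E) : ‖w‖ ^ 2 = ∑ j, w j ^ 2 := by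
  rw [EuclideanSpace.norm_eq, Real.sq_sqrt (by positivity)]
  simp [Real.norm_eq_abs, sq_abs]

lemma euclid_inner_eq (v w : E) : ⟪v, w⟫ = ∑ j, v j * w j := by
  simp [PiLp.inner_apply, RCLike.inner_apply, mul_comm]

lemma clm_eval_sum (T : E →L[ℝ] ℝ) (w : E) :
    T w = ∑ j, w j * T (EuclideanSpace.single j 1) := by
  have hw : w = ∑ j, w j • (EuclideanSpace.single j (1:ℝ)) := by
    have := (EuclideanSpace.basisFun (Fin d) ℝ).sum_repr w
    simp only [EuclideanSpace.basisFun_apply, EuclideanSpace.basisFun_repr] at this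
    exact this.symm
  conv_lhs => rw [hw]
  rw [map_sum]
  simp

lemma deriv_nonneg_of_monotoneOn {f : ℝ → ℝ} {s : Set ℝ} {a : ℝ} (hs : s ∈ nhds a)
    (hm : MonotoneOn f s) (hd : DifferentiableAt ℝ f a) : 0 ≤ deriv f a := by
  have h := hd.hasDerivAt
  rw [hasDerivAt_iff_tendsto_slope] at h
  have h' : Filter.Tendsto (slope f a) (nhdsWithin a (Set.Ioi a)) (nhds (deriv f a)) :=
    h.mono_left (nhdsWithin_mono a fun z hz => Set.mem_compl_singleton_iff.2 (ne_of_gt hz))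
  refine ge_of_tendsto h' ?_
  filter_upwards [self_mem_nhdsWithin, eventually_nhdsWithin_of_eventually_nhds hs] with
    b hb hbs
  have ha : a ∈ s := mem_of_mem_nhds hs
  have : f a ≤ f b := hm ha hbs (le_of_lt hb)
  have hba : 0 < b - a := sub_pos.2 hb
  rw [slope_def_field]
  exact div_nonneg (by linarith) (le_of_lt hba)



/-- basis vector -/
noncomputable def eb (i : Fin d) : EuclideanSpace ℝ (Fin d) := EuclideanSpace.single i 1

/-- first derivative as CLM-valued map -/
noncomputable def A1 (u : EuclideanSpace ℝ (Fin d) → ℝ) :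
    EuclideanSpace ℝ (Fin d) → EuclideanSpace ℝ (Fin d) →L[ℝ] ℝ := fderiv ℝ u

/-- second derivative -/
noncomputable def C2 (u : EuclideanSpace ℝ (Fin d) → ℝ) :
    EuclideanSpace ℝ (Fin d) →
      EuclideanSpace ℝ (Fin d) →L[ℝ] EuclideanSpace ℝ (Fin d) →L[ℝ] ℝ := fderiv ℝ (A1 u)

/-- third derivative at a point -/
noncomputable def D3 (u : EuclideanSpace ℝ (Fin d) → ℝ) (x : EuclideanSpace ℝ (Fin d)) :
    EuclideanSpace ℝ (Fin d) →L[ℝ]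
      EuclideanSpace ℝ (Fin d) →L[ℝ] EuclideanSpace ℝ (Fin d) →L[ℝ] ℝ := fderiv ℝ (C2 u) x

/-- partial derivative function -/
noncomputable def vj (u : EuclideanSpace ℝ (Fin d) → ℝ) (j : Fin d) :
    EuclideanSpace ℝ (Fin d) → ℝ := fun z => A1 u z (eb j)

/-- squared norm of the gradient, coordinatewise -/
noncomputable def hsq (u : EuclideanSpace ℝ (Fin d) → ℝ) :
    EuclideanSpace ℝ (Fin d) → ℝ := fun z => ∑ j, (vj u j z) ^ 2

lemma hasFDerivAt_clm_apply_const {F : Type*} [NormedAddCommGroup F] [NormedSpace ℝ F]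
    {c : EuclideanSpace ℝ (Fin d) → EuclideanSpace ℝ (Fin d) →L[ℝ] F}
    {c' : EuclideanSpace ℝ (Fin d) →L[ℝ] EuclideanSpace ℝ (Fin d) →L[ℝ] F}
    {x : EuclideanSpace ℝ (Fin d)} (hc : HasFDerivAt c c' x) (a : EuclideanSpace ℝ (Fin d)) :
    HasFDerivAt (fun z => c z a) (c'.flip a) x := by
  simpa using hc.clm_apply (hasFDerivAt_const a x)

section

variable {O : Set (EuclideanSpace ℝ (Fin d))} {u : EuclideanSpace ℝ (Fin d) → ℝ}
  (hO : IsOpen O) (hu : ContDiffOn ℝ 3 u O)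

include hO hu

lemma aux_A2 : ContDiffOn ℝ 2 (A1 u) O := hu.fderiv_of_isOpen hO (by norm_num)

lemma aux_Az {z : EuclideanSpace ℝ (Fin d)} (hz : z ∈ O) : HasFDerivAt (A1 u) (C2 u z) z :=
  (((aux_A2 hO hu).contDiffAt (hO.mem_nhds hz)).differentiableAt two_ne_zero).hasFDerivAt

lemma aux_uz {z : EuclideanSpace ℝ (Fin d)} (hz : z ∈ O) : HasFDerivAt u (A1 u z) z :=
  ((hu.contDiffAt (hO.mem_nhds hz)).differentiableAt (by norm_num)).hasFDerivAt

lemma aux_Cx {x : EuclideanSpace ℝ (Fin d)} (hx : x ∈ O) : HasFDerivAt (C2 u) (D3 u x) x := by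
  have h1 : ContDiffOn ℝ 1 (C2 u) O := (aux_A2 hO hu).fderiv_of_isOpen hO (by norm_num)
  exact ((h1.contDiffAt (hO.mem_nhds hx)).differentiableAt one_ne_zero).hasFDerivAt

lemma aux_vz {z : EuclideanSpace ℝ (Fin d)} (hz : z ∈ O) (j : Fin d) :
    HasFDerivAt (vj u j) ((C2 u z).flip (eb j)) z :=
  hasFDerivAt_clm_apply_const (aux_Az hO hu hz) (eb j)

lemma aux_symC {z : EuclideanSpace ℝ (Fin d)} (hz : z ∈ O)
    (a b : EuclideanSpace ℝ (Fin d)) : C2 u z a b = C2 u z b a :=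
  (hu.contDiffAt (hO.mem_nhds hz)).isSymmSndFDerivAt (by norm_num) a b

lemma aux_Cab {x : EuclideanSpace ℝ (Fin d)} (hx : x ∈ O) (a b : EuclideanSpace ℝ (Fin d)) :
    HasFDerivAt (fun z => C2 u z a b) (((D3 u x).flip a).flip b) x :=
  hasFDerivAt_clm_apply_const (hasFDerivAt_clm_apply_const (aux_Cx hO hu hx) a) b

lemma aux_symD12 {x : EuclideanSpace ℝ (Fin d)} (hx : x ∈ O)
    (a b : EuclideanSpace ℝ (Fin d)) : D3 u x a b = D3 u x b a :=
  ((aux_A2 hO hu).contDiffAt (hO.mem_nhds hx)).isSymmSndFDerivAt (by simp) a b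

lemma aux_symD23 {x : EuclideanSpace ℝ (Fin d)} (hx : x ∈ O)
    (w a b : EuclideanSpace ℝ (Fin d)) : D3 u x w a b = D3 u x w b a := by
  have h1 := (aux_Cab hO hu hx a b).fderiv
  have h2 := (aux_Cab hO hu hx b a).fderiv
  have heq : (fun z => C2 u z a b) =ᶠ[nhds x] (fun z => C2 u z b a) := by
    filter_upwards [hO.mem_nhds hx] with z hz using aux_symC hO hu hz a b
  have h3 : (((D3 u x).flip a).flip b) = (((D3 u x).flip b).flip a) := by
    rw [← h1, ← h2]; exact heq.fderiv_eq
  calc D3 u x w a b = (((D3 u x).flip a).flip b) w := rfl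
    _ = (((D3 u x).flip b).flip a) w := by rw [h3]
    _ = D3 u x w b a := rfl

lemma aux_hsq' {z : EuclideanSpace ℝ (Fin d)} (hz : z ∈ O) :
    HasFDerivAt (hsq u) (∑ j, (2 * vj u j z) • ((C2 u z).flip (eb j))) z := by
  unfold hsq
  apply HasFDerivAt.fun_sum
  intro j _
  have h1 := ((aux_vz hO hu hz j).mul (aux_vz hO hu hz j))
  have : (vj u j z) • ((C2 u z).flip (eb j)) + (vj u j z) • ((C2 u z).flip (eb j))
      = (2 * vj u j z) • ((C2 u z).flip (eb j)) := by
    rw [two_mul, add_smul]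
  rw [← this]
  have h2 : (fun z' => (vj u j z') ^ 2) = fun z' => vj u j z' * vj u j z' := by
    funext z'; ring
  rw [h2]
  exact h1

/-- the total derivative of `OU u` at `x` -/
noncomputable def Mmap (u : EuclideanSpace ℝ (Fin d) → ℝ) (x : EuclideanSpace ℝ (Fin d)) :
    EuclideanSpace ℝ (Fin d) →L[ℝ] ℝ :=
  (∑ i, ((D3 u x).flip (eb i)).flip (eb i)) -
    ((A1 u x).comp (ContinuousLinearMap.id ℝ _) + (C2 u x).flip x)

omit hO hu in
lemma pd_eq_vj (j : Fin d) : pd j u = vj u j := rfl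

lemma aux_OUx {x : EuclideanSpace ℝ (Fin d)} (hx : x ∈ O) :
    HasFDerivAt (OU u) (Mmap u x) x := by
  have hS : HasFDerivAt (fun z => ∑ i, pd i (pd i u) z)
      (∑ i, ((D3 u x).flip (eb i)).flip (eb i)) x := by
    apply HasFDerivAt.fun_sum
    intro i _
    refine (aux_Cab hO hu hx (eb i) (eb i)).congr_of_eventuallyEq ?_
    filter_upwards [hO.mem_nhds hx] with z hz
    show pd i (pd i u) z = C2 u z (eb i) (eb i)
    have hf : fderiv ℝ (vj u i) z = (C2 u z).flip (eb i) := (aux_vz hO hu hz i).fderiv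
    calc pd i (pd i u) z = fderiv ℝ (vj u i) z (eb i) := rfl
      _ = C2 u z (eb i) (eb i) := by rw [hf]; rfl
  have hF : HasFDerivAt (fun z => (⟪z, gradient u z⟫ : ℝ))
      ((A1 u x).comp (ContinuousLinearMap.id ℝ _) + (C2 u x).flip x) x := by
    have hfe : (fun z => (⟪z, gradient u z⟫ : ℝ)) = fun z => A1 u z z :=
      funext fun z => inner_grad u z z
    rw [hfe]
    exact (aux_Az hO hu hx).clm_apply (hasFDerivAt_id x)
  exact (hS.sub hF).congr_of_eventuallyEq (Filter.Eventually.of_forall fun z => rfl)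

lemma aux_Mj {x : EuclideanSpace ℝ (Fin d)} (hx : x ∈ O) (j : Fin d) :
    ∑ i, D3 u x (eb i) (eb i) (eb j) = Mmap u x (eb j) + vj u j x + C2 u x x (eb j) := by
  have h1 : ∀ i, D3 u x (eb i) (eb i) (eb j) = D3 u x (eb j) (eb i) (eb i) := by
    intro i
    rw [aux_symD23 hO hu hx (eb i) (eb i) (eb j)]
    have h12 := aux_symD12 hO hu hx (eb i) (eb j)
    exact congrFun (congrArg _ h12) (eb i)
  have h2 : C2 u x (eb j) x = C2 u x x (eb j) := aux_symC hO hu hx (eb j) x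
  simp only [h1]
  have hM : Mmap u x (eb j)
      = (∑ i, D3 u x (eb j) (eb i) (eb i)) - (A1 u x (eb j) + C2 u x (eb j) x) := by
    simp [Mmap, ContinuousLinearMap.sum_apply]
  rw [hM, h2]
  have : A1 u x (eb j) = vj u j x := rfl
  rw [this]
  ring

end

set_option maxHeartbeats 2000000 in
theorem ou_of_convex_composition_lower_bound {d : ℕ}
    (O : Set (EuclideanSpace ℝ (Fin d))) (hO : IsOpen O)
    (u : EuclideanSpace ℝ (Fin d) → ℝ) (hu : ContDiffOn ℝ 3 u O)
    (σ : ℝ) (hσ : 0 < σ) (y : EuclideanSpace ℝ (Fin d) → ℝ)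
    (hy : ∀ x ∈ O, y x = u x - σ * OU u x) (ε : ℝ) (hε : 0 < ε)
    (g : ℝ → ℝ) (hg : ContDiffOn ℝ 2 g (Set.Ici 0))
    (hgconv : ConvexOn ℝ (Set.Ici 0) g) (hgmono : MonotoneOn g (Set.Ici 0)) :
    ∀ x ∈ O,
      σ * OU (fun z => g (phiEps ε u z)) x ≥
        deriv g (phiEps ε u x) *
          ((phi u x) ^ 2 / phiEps ε u x - ‖gradient y x‖) := by
  intro x hx
  -- basic scalars
  set s0 : ℝ := hsq u x with hs0def
  have hs0nonneg : 0 ≤ s0 := by rw [hs0def]; unfold hsq; positivity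
  set r : ℝ := Real.sqrt (ε ^ 2 + s0) with hrdef
  have hrpos : 0 < r := Real.sqrt_pos.2 (by positivity)
  have hr2 : r ^ 2 = ε ^ 2 + s0 := Real.sq_sqrt (by positivity)
  have hnormgrad : ‖gradient u x‖ ^ 2 = s0 := by
    rw [euclid_norm_sq, hs0def]
    unfold hsq
    exact Finset.sum_congr rfl fun j _ => by rw [grad_coord_s9]; rfl
  have hrphi : phiEps ε u x = r := by rw [phiEps, hnormgrad]
  have hphisq : phi u x ^ 2 = s0 := hnormgrad
  set g1 : ℝ := deriv g r with hg1def
  set g2 : ℝ := deriv (deriv g) r with hg2def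
  -- facts about g
  have hgr2 : ContDiffAt ℝ 2 g r := hg.contDiffAt (Ici_mem_nhds hrpos)
  have hg1' : HasDerivAt g g1 r := (hgr2.differentiableAt two_ne_zero).hasDerivAt
  have hg1nonneg : 0 ≤ g1 := deriv_nonneg_of_monotoneOn (Ioi_mem_nhds hrpos)
    (hgmono.mono Set.Ioi_subset_Ici_self) hg1'.differentiableAt
  obtain ⟨U, hUnhds, hgU⟩ := hgr2.contDiffOn le_rfl (by norm_num)
  have hU'open : IsOpen (interior U) := isOpen_interior
  have hrU' : r ∈ interior U := mem_interior_iff_mem_nhds.2 hUnhds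
  have hdg1 : ContDiffOn ℝ 1 (deriv g) (interior U) :=
    (hgU.mono interior_subset).deriv_of_isOpen hU'open (by norm_num)
  have hg2' : HasDerivAt (deriv g) g2 r :=
    ((hdg1.contDiffAt (hU'open.mem_nhds hrU')).differentiableAt one_ne_zero).hasDerivAt
  have hgIoi : ∀ t ∈ Set.Ioi (0 : ℝ), DifferentiableAt ℝ g t := fun t ht =>
    (hg.contDiffAt (Ici_mem_nhds ht)).differentiableAt two_ne_zero
  have hg2nonneg : 0 ≤ g2 := deriv_nonneg_of_monotoneOn (Ioi_mem_nhds hrpos)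
    ((hgconv.subset Set.Ioi_subset_Ici_self (convex_Ioi 0)).monotoneOn_deriv hgIoi)
    hg2'.differentiableAt
  -- the outer function G and its derivatives
  set G : ℝ → ℝ := fun t => g (Real.sqrt (ε ^ 2 + t)) with hGdef
  set Gd : ℝ → ℝ :=
    fun t => deriv g (Real.sqrt (ε ^ 2 + t)) * (1 / (2 * Real.sqrt (ε ^ 2 + t))) with hGddef
  have hsqrt' : ∀ t : ℝ, 0 ≤ t →
      HasDerivAt (fun s => Real.sqrt (ε ^ 2 + s)) (1 / (2 * Real.sqrt (ε ^ 2 + t))) t := by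
    intro t ht
    have h0 : (ε ^ 2 + t) ≠ 0 := by positivity
    have := (Real.hasDerivAt_sqrt h0).comp t ((hasDerivAt_id t).const_add (ε ^ 2))
    simpa [Function.comp_def] using this
  have hGdz : ∀ t : ℝ, 0 ≤ t → HasDerivAt G (Gd t) t := by
    intro t ht
    have hrt : 0 < Real.sqrt (ε ^ 2 + t) := Real.sqrt_pos.2 (by positivity)
    have hgd : HasDerivAt g (deriv g (Real.sqrt (ε ^ 2 + t))) (Real.sqrt (ε ^ 2 + t)) :=
      ((hg.contDiffAt (Ici_mem_nhds hrt)).differentiableAt two_ne_zero).hasDerivAt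
    have := hgd.comp t (hsqrt' t ht)
    simpa [hGddef, Function.comp_def] using this
  have hinv : HasDerivAt (fun t : ℝ => 1 / (2 * t)) (-2 / (2 * r) ^ 2) r := by
    have h1 : HasDerivAt (fun t : ℝ => 2 * t) 2 r := by
      simpa using (hasDerivAt_id r).const_mul (2 : ℝ)
    simpa [one_div, Pi.inv_def] using h1.inv (by positivity)
  set Gdd : ℝ := (g2 * (1 / (2 * r)) + deriv g r * (-2 / (2 * r) ^ 2)) * (1 / (2 * r))
    with hGdddef
  have hGd' : HasDerivAt Gd Gdd s0 := by
    have houter := hg2'.mul hinv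
    have hcomp := houter.comp s0 (hsqrt' s0 hs0nonneg)
    rw [← hrdef] at hcomp
    simpa [hGddef, hGdddef, Function.comp_def] using hcomp
  -- the composition ψ = G ∘ hsq
  have hpsiEq : (fun z => g (phiEps ε u z)) = fun z => G (hsq u z) := by
    funext z
    have hz' : ‖gradient u z‖ ^ 2 = hsq u z := by
      rw [euclid_norm_sq]
      unfold hsq
      exact Finset.sum_congr rfl fun j _ => by rw [grad_coord_s9]; rfl
    rw [phiEps, hz']
  have hpsi' : ∀ z ∈ O, HasFDerivAt (fun z' => G (hsq u z'))
      (Gd (hsq u z) • (∑ j, (2 * vj u j z) • ((C2 u z).flip (eb j)))) z := by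
    intro z hz
    have h0 : 0 ≤ hsq u z := by unfold hsq; positivity
    exact (hGdz (hsq u z) h0).comp_hasFDerivAt z (aux_hsq' hO hu hz)
  set q : Fin d → EuclideanSpace ℝ (Fin d) → ℝ :=
    fun i z => ∑ j, (2 * vj u j z) * C2 u z (eb i) (eb j) with hqdef
  have hpdpsi : ∀ i, pd i (fun z => g (phiEps ε u z))
      =ᶠ[nhds x] fun z => Gd (hsq u z) * q i z := by
    intro i
    filter_upwards [hO.mem_nhds hx] with z hz
    show fderiv ℝ (fun z' => g (phiEps ε u z')) z (EuclideanSpace.single i 1) = _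
    rw [hpsiEq, (hpsi' z hz).fderiv]
    simp only [hqdef, ContinuousLinearMap.smul_apply, ContinuousLinearMap.sum_apply,
      smul_eq_mul, Finset.mul_sum]
    rfl
  have hq' : ∀ i, HasFDerivAt (q i)
      (∑ j, ((2 * vj u j x) • (((D3 u x).flip (eb i)).flip (eb j))
        + C2 u x (eb i) (eb j) • ((2:ℝ) • ((C2 u x).flip (eb j))))) x := by
    intro i
    apply HasFDerivAt.fun_sum
    intro j _
    have hc : HasFDerivAt (fun z => 2 * vj u j z) ((2:ℝ) • ((C2 u x).flip (eb j))) x :=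
      (aux_vz hO hu hx j).const_mul 2
    exact hc.mul (aux_Cab hO hu hx (eb i) (eb j))
  set Dh : EuclideanSpace ℝ (Fin d) →L[ℝ] ℝ :=
    ∑ j, (2 * vj u j x) • ((C2 u x).flip (eb j)) with hDhdef
  have hDh_ei : ∀ i, Dh (eb i) = q i x := by
    intro i
    rw [hDhdef, hqdef]
    simp only [ContinuousLinearMap.sum_apply, ContinuousLinearMap.smul_apply, smul_eq_mul]
    rfl
  have hGdh : HasFDerivAt (fun z => Gd (hsq u z)) (Gdd • Dh) x :=
    by have h' : HasDerivAt Gd Gdd (hsq u x) := hGd'; exact h'.comp_hasFDerivAt x (aux_hsq' hO hu hx)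
  have hLi : ∀ i, pd i (pd i (fun z => g (phiEps ε u z))) x
      = Gdd * (q i x) * (q i x)
        + Gd s0 * (∑ j, ((2 * vj u j x) * D3 u x (eb i) (eb i) (eb j)
            + 2 * C2 u x (eb i) (eb j) ^ 2)) := by
    intro i
    show fderiv ℝ (pd i (fun z => g (phiEps ε u z))) x (EuclideanSpace.single i 1) = _
    rw [(hpdpsi i).fderiv_eq, (show HasFDerivAt (fun z => Gd (hsq u z) * q i z) _ x from hGdh.mul (hq' i)).fderiv]
    have hev : (EuclideanSpace.single i 1 : EuclideanSpace ℝ (Fin d)) = eb i := rfl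
    rw [hev]
    simp only [ContinuousLinearMap.add_apply, ContinuousLinearMap.smul_apply,
      ContinuousLinearMap.sum_apply, smul_eq_mul]
    rw [hDh_ei i]
    have hsum : ∀ j, 2 * vj u j x * ((((D3 u x).flip (eb i)).flip (eb j)) (eb i))
          + C2 u x (eb i) (eb j) * (2 * (((C2 u x).flip (eb j)) (eb i)))
        = 2 * vj u j x * D3 u x (eb i) (eb i) (eb j)
          + 2 * C2 u x (eb i) (eb j) ^ 2 := by
      intro j
      have h2 : (((D3 u x).flip (eb i)).flip (eb j)) (eb i) = D3 u x (eb i) (eb i) (eb j) := rfl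
      have h3 : ((C2 u x).flip (eb j)) (eb i) = C2 u x (eb i) (eb j) := rfl
      rw [h2, h3]
      ring
    simp only [hsum]
    rw [← hs0def]
    ring
  -- the inner product term of OU ψ
  have hinner_psi : (⟪x, gradient (fun z => g (phiEps ε u z)) x⟫ : ℝ)
      = Gd s0 * (∑ j, (2 * vj u j x) * C2 u x x (eb j)) := by
    rw [inner_grad, hpsiEq, (hpsi' x hx).fderiv]
    simp only [ContinuousLinearMap.smul_apply, ContinuousLinearMap.sum_apply, smul_eq_mul]
    rw [← hs0def]
    rfl
  set T : ℝ := ∑ i, ∑ j, C2 u x (eb i) (eb j) ^ 2 with hTdef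
  set N : ℝ := ∑ i, (q i x) ^ 2 with hNdef
  set P : ℝ := ∑ j, vj u j x * Mmap u x (eb j) with hPdef
  have hOUpsi : OU (fun z => g (phiEps ε u z)) x
      = Gdd * N + Gd s0 * (2 * T + 2 * P + 2 * s0) := by
    have hOUdef : OU (fun z => g (phiEps ε u z)) x
        = (∑ i, pd i (pd i (fun z => g (phiEps ε u z))) x)
          - (⟪x, gradient (fun z => g (phiEps ε u z)) x⟫ : ℝ) := rfl
    rw [hOUdef, hinner_psi]
    rw [Finset.sum_congr rfl fun i _ => hLi i]
    have e1 : ∑ i, (Gdd * q i x * q i x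
          + Gd s0 * (∑ j, ((2 * vj u j x) * D3 u x (eb i) (eb i) (eb j)
              + 2 * C2 u x (eb i) (eb j) ^ 2)))
        = Gdd * N + Gd s0 * (2 * T + 2 * P + 2 * s0
            + ∑ j, (2 * vj u j x) * C2 u x x (eb j)) := by
      rw [Finset.sum_add_distrib, ← Finset.mul_sum]
      congr 1
      · rw [hNdef, Finset.mul_sum]
        exact Finset.sum_congr rfl fun i _ => by ring
      · congr 1
        calc ∑ i, ∑ j, ((2 * vj u j x) * D3 u x (eb i) (eb i) (eb j)
                + 2 * C2 u x (eb i) (eb j) ^ 2)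
            = ∑ j, ∑ i, ((2 * vj u j x) * D3 u x (eb i) (eb i) (eb j)
                + 2 * C2 u x (eb i) (eb j) ^ 2) := Finset.sum_comm
          _ = ∑ j, ((2 * vj u j x) * (∑ i, D3 u x (eb i) (eb i) (eb j))
                + ∑ i, 2 * C2 u x (eb i) (eb j) ^ 2) := by
              exact Finset.sum_congr rfl fun j _ => by
                rw [Finset.sum_add_distrib, Finset.mul_sum]
          _ = ∑ j, ((2 * vj u j x) * (Mmap u x (eb j) + vj u j x + C2 u x x (eb j))
                + ∑ i, 2 * C2 u x (eb i) (eb j) ^ 2) := by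
              exact Finset.sum_congr rfl fun j _ => by rw [aux_Mj hO hu hx j]
          _ = 2 * T + 2 * P + 2 * s0 + ∑ j, (2 * vj u j x) * C2 u x x (eb j) := by
              rw [Finset.sum_add_distrib]
              have hTswap : ∑ j, ∑ i, 2 * C2 u x (eb i) (eb j) ^ 2 = 2 * T := by
                rw [Finset.sum_comm, hTdef, Finset.mul_sum]
                exact Finset.sum_congr rfl fun i _ => by rw [Finset.mul_sum]
              have hPpart : ∑ j, (2 * vj u j x) * (Mmap u x (eb j) + vj u j x
                    + C2 u x x (eb j))
                  = 2 * P + 2 * s0 + ∑ j, (2 * vj u j x) * C2 u x x (eb j) := by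
                rw [hPdef, hs0def]
                unfold hsq
                rw [Finset.mul_sum, Finset.mul_sum]
                rw [← Finset.sum_add_distrib, ← Finset.sum_add_distrib]
                exact Finset.sum_congr rfl fun j _ => by ring
              rw [hTswap, hPpart]
              ring
    rw [e1]
    ring
  -- gradient of y
  have hip : (⟪gradient u x, gradient y x⟫ : ℝ) = s0 - σ * P := by
    rw [real_inner_comm, grad_inner]
    have hyd : HasFDerivAt y (A1 u x - σ • Mmap u x) x := by
      have h1 : HasFDerivAt (fun z => u z - σ * OU u z) (A1 u x - σ • Mmap u x) x :=
        (aux_uz hO hu hx).sub ((aux_OUx hO hu hx).const_mul σ)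
      exact h1.congr_of_eventuallyEq
        (by filter_upwards [hO.mem_nhds hx] with z hz using hy z hz)
    rw [hyd.fderiv]
    simp only [ContinuousLinearMap.sub_apply, ContinuousLinearMap.smul_apply, smul_eq_mul]
    have h2 : A1 u x (gradient u x) = s0 := by
      show fderiv ℝ u x (gradient u x) = s0
      rw [← grad_inner u x (gradient u x), real_inner_self_eq_norm_sq, hnormgrad]
    have h3 : Mmap u x (gradient u x) = P := by
      rw [clm_eval_sum (Mmap u x) (gradient u x), hPdef]
      exact Finset.sum_congr rfl fun j _ => by rw [grad_coord_s9]; rfl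
    rw [h2, h3]
  -- Cauchy-Schwarz bound
  have hT0 : 0 ≤ T := Finset.sum_nonneg fun i _ => Finset.sum_nonneg fun j _ => sq_nonneg _
  have hN0 : 0 ≤ N := Finset.sum_nonneg fun i _ => sq_nonneg _
  have hNle : N ≤ 4 * (s0 * T) := by
    rw [hNdef]
    have hstep : ∀ i, (q i x) ^ 2
        ≤ 4 * ((∑ j, (vj u j x) ^ 2) * ∑ j, C2 u x (eb i) (eb j) ^ 2) := by
      intro i
      have hq2 : q i x = 2 * ∑ j, vj u j x * C2 u x (eb i) (eb j) := by
        rw [hqdef, Finset.mul_sum]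
        exact Finset.sum_congr rfl fun j _ => by ring
      rw [hq2, mul_pow]
      have hcs := Finset.sum_mul_sq_le_sq_mul_sq Finset.univ (fun j => vj u j x)
        (fun j => C2 u x (eb i) (eb j))
      norm_num
      linarith [hcs]
    calc ∑ i, (q i x) ^ 2
        ≤ ∑ i, 4 * ((∑ j, (vj u j x) ^ 2) * ∑ j, C2 u x (eb i) (eb j) ^ 2) :=
          Finset.sum_le_sum fun i _ => hstep i
      _ = 4 * (s0 * T) := by
          rw [hTdef, hs0def]
          unfold hsq
          rw [Finset.mul_sum, Finset.mul_sum]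
  -- norm bound
  have hVr : ‖gradient u x‖ ≤ r := by
    rw [← Real.sqrt_sq (norm_nonneg (gradient u x)), hnormgrad, hrdef]
    exact Real.sqrt_le_sqrt (by nlinarith [sq_nonneg ε])
  have hs0r2 : s0 ≤ r ^ 2 := by nlinarith [sq_nonneg ε]
  -- final assembly
  rw [ge_iff_le, hrphi, hphisq, hOUpsi, ← hg1def]
  set β : ℝ := ‖gradient y x‖ with hβdef
  have hβ0 : 0 ≤ β := norm_nonneg _
  have hσP : s0 - r * β ≤ σ * P := by
    have h4 : (⟪gradient u x, gradient y x⟫ : ℝ) ≤ r * β := by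
      calc (⟪gradient u x, gradient y x⟫ : ℝ) ≤ ‖gradient u x‖ * β := real_inner_le_norm _ _
        _ ≤ r * β := mul_le_mul_of_nonneg_right hVr hβ0
    linarith [hip]
  have hGd0 : Gd s0 * (2 * r) = g1 := by
    rw [hGddef]
    simp only []
    rw [← hrdef, hg1def]
    field_simp
  have hGdd4 : Gdd * (4 * r ^ 3) = g2 * r - g1 := by
    rw [hGdddef, ← hg1def]
    field_simp
    ring
  have expand : (4 * r ^ 3) * (σ * (Gdd * N + Gd s0 * (2 * T + 2 * P + 2 * s0)))
      = σ * ((g2 * r - g1) * N + 2 * g1 * r ^ 2 * (2 * T + 2 * P + 2 * s0)) := by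
    linear_combination (σ * N) * hGdd4 + (σ * 2 * r ^ 2 * (2 * T + 2 * P + 2 * s0)) * hGd0
  have rhs4 : (4 * r ^ 3) * (g1 * (s0 / r - β)) = 4 * g1 * s0 * r ^ 2 - 4 * g1 * β * r ^ 3 := by
    field_simp
  have hB : 0 ≤ σ * g1 * (4 * r ^ 2 * T - N) := by
    apply mul_nonneg (mul_nonneg hσ.le hg1nonneg)
    nlinarith [mul_le_mul_of_nonneg_right hs0r2 hT0]
  have hA : 0 ≤ σ * g2 * r * N := by positivity
  have hC : 0 ≤ 4 * σ * g1 * r ^ 2 * s0 := by positivity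
  have hD : 0 ≤ 4 * g1 * r ^ 2 * (σ * P - (s0 - r * β)) := by
    apply mul_nonneg (by positivity)
    linarith [hσP]
  have main : (4 * r ^ 3) * (g1 * (s0 / r - β))
      ≤ (4 * r ^ 3) * (σ * (Gdd * N + Gd s0 * (2 * T + 2 * P + 2 * s0))) := by
    rw [expand, rhs4]
    nlinarith [hA, hB, hC, hD]
  have hr3 : (0:ℝ) < 4 * r ^ 3 := by positivity
  exact le_of_mul_le_mul_left main hr3
end

section
/- Let α ∈ (0,1), let g'' : ℝ → ℝ be α-Hölder continuous with Hölder seminorm [g'']_α (i.e., |g''(a) − g''(b)| ≤ [g'']_α |a − b|^α for all a, b ∈ ℝ), let x₁, x₂ ∈ L²(0,1), and let h, k : [0,1] → ℝ be absolutely continuous with h(0) = k(0) = 0 and derivatives h', k' ∈ L²(0,1). Then |∫_0^1 (g''(x₁(s)) − g''(x₂(s))) h(s) k(s) ds| ≤ [g'']_α ‖h'‖_{L²(0,1)} ‖k'‖_{L²(0,1)} ‖x₁ − x₂‖_{L²(0,1)}^α. -/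
open Real MeasureTheory

private lemma habs2 (y : ℝ) : |y| ^ (2:ℝ) = y ^ 2 := by
  rw [show (2:ℝ) = ((2:ℕ):ℝ) by norm_num, Real.rpow_natCast, sq_abs]

private lemma cs_aux {μ : Measure ℝ} [IsProbabilityMeasure μ]
    {f : ℝ → ℝ} (hf : MemLp f 2 μ) :
    ∫ t, |f t| ∂μ ≤ (∫ t, f t ^ 2 ∂μ) ^ ((1:ℝ)/2) := by
  have hpq : Real.HolderConjugate 2 2 := Real.holderConjugate_iff.mpr ⟨one_lt_two, by norm_num⟩
  have hfa : MemLp (fun t => |f t|) (ENNReal.ofReal (2:ℝ)) μ := by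
    rw [show ENNReal.ofReal (2:ℝ) = 2 by simp]
    simpa [Real.norm_eq_abs] using hf.norm
  have hg : MemLp (fun _ : ℝ => (1:ℝ)) (ENNReal.ofReal (2:ℝ)) μ := memLp_const 1
  have H := integral_mul_le_Lp_mul_Lq_of_nonneg hpq
    (Filter.Eventually.of_forall fun t => abs_nonneg (f t))
    (Filter.Eventually.of_forall fun _ => zero_le_one) hfa hg
  simp only [mul_one, Real.one_rpow] at H
  rw [integral_const, probReal_univ, one_smul, Real.one_rpow, mul_one] at H
  calc ∫ t, |f t| ∂μ ≤ (∫ t, |f t| ^ (2:ℝ) ∂μ) ^ ((1:ℝ)/2) := H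
    _ = (∫ t, f t ^ 2 ∂μ) ^ ((1:ℝ)/2) := by
        congr 1
        exact integral_congr_ae (Filter.Eventually.of_forall fun t => habs2 (f t))

private lemma primitive_bound {f' : ℝ → ℝ}
    (hf' : MemLp f' 2 (volume.restrict (Set.Ioc (0:ℝ) 1))) {s : ℝ}
    (hs : s ∈ Set.Icc (0:ℝ) 1) :
    |∫ t in (0:ℝ)..s, f' t| ≤ (∫ t in Set.Ioc (0:ℝ) 1, f' t ^ 2) ^ ((1:ℝ)/2) := by
  haveI : IsProbabilityMeasure (volume.restrict (Set.Ioc (0:ℝ) 1)) :=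
    ⟨by simp [Real.volume_Ioc]⟩
  have hint : IntegrableOn (fun t => |f' t|) (Set.Ioc (0:ℝ) 1) volume :=
    (hf'.integrable one_le_two).abs
  rw [intervalIntegral.integral_of_le hs.1]
  calc |∫ t in Set.Ioc 0 s, f' t| ≤ ∫ t in Set.Ioc 0 s, |f' t| := by
        simpa [Real.norm_eq_abs] using
          norm_integral_le_integral_norm (μ := volume.restrict (Set.Ioc 0 s)) f'
    _ ≤ ∫ t in Set.Ioc (0:ℝ) 1, |f' t| :=
        setIntegral_mono_set hint (Filter.Eventually.of_forall fun t => abs_nonneg _)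
          (HasSubset.Subset.eventuallyLE (Set.Ioc_subset_Ioc_right hs.2))
    _ ≤ _ := cs_aux hf'

theorem holder_second_derivative_bilinear_estimate
    (α : ℝ) (hα : α ∈ Set.Ioo (0 : ℝ) 1)
    (G : ℝ → ℝ) (C : ℝ) (hG : ∀ a b : ℝ, |G a - G b| ≤ C * |a - b| ^ α)
    (x₁ x₂ : ℝ → ℝ) (hx₁m : Measurable x₁) (hx₂m : Measurable x₂)
    (hx₁ : MemLp x₁ 2 (volume.restrict (Set.Ioc (0 : ℝ) 1)))
    (hx₂ : MemLp x₂ 2 (volume.restrict (Set.Ioc (0 : ℝ) 1)))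
    (h k h' k' : ℝ → ℝ)
    (hh : ∀ t ∈ Set.Icc (0 : ℝ) 1, h t = ∫ s in (0 : ℝ)..t, h' s)
    (hk : ∀ t ∈ Set.Icc (0 : ℝ) 1, k t = ∫ s in (0 : ℝ)..t, k' s)
    (hh' : MemLp h' 2 (volume.restrict (Set.Ioc (0 : ℝ) 1)))
    (hk' : MemLp k' 2 (volume.restrict (Set.Ioc (0 : ℝ) 1))) :
    |∫ s in (0 : ℝ)..1, (G (x₁ s) - G (x₂ s)) * h s * k s| ≤
      C * Real.sqrt (∫ s in (0 : ℝ)..1, h' s ^ 2) *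
        Real.sqrt (∫ s in (0 : ℝ)..1, k' s ^ 2) *
          Real.sqrt (∫ s in (0 : ℝ)..1, (x₁ s - x₂ s) ^ 2) ^ α := by
  obtain ⟨hα0, hα1⟩ := hα
  haveI : IsProbabilityMeasure (volume.restrict (Set.Ioc (0:ℝ) 1)) :=
    ⟨by simp [Real.volume_Ioc]⟩
  have hC : 0 ≤ C := by
    have h01 := hG 0 1
    rw [show |(0:ℝ) - 1| = 1 by norm_num, Real.one_rpow, mul_one] at h01
    exact (abs_nonneg _).trans h01
  have hHn0 : 0 ≤ (∫ t in Set.Ioc (0:ℝ) 1, h' t ^ 2) ^ ((1:ℝ)/2) :=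
    Real.rpow_nonneg (integral_nonneg fun t => sq_nonneg _) _
  have hKn0 : 0 ≤ (∫ t in Set.Ioc (0:ℝ) 1, k' t ^ 2) ^ ((1:ℝ)/2) :=
    Real.rpow_nonneg (integral_nonneg fun t => sq_nonneg _) _
  have hX : MemLp (fun s => x₁ s - x₂ s) 2 (volume.restrict (Set.Ioc (0:ℝ) 1)) :=
    hx₁.sub hx₂
  have hXα : MemLp (fun s => |x₁ s - x₂ s| ^ α) (ENNReal.ofReal (2/α))
      (volume.restrict (Set.Ioc (0:ℝ) 1)) := by
    have h1 := hX.norm_rpow_div (ENNReal.ofReal α)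
    rw [ENNReal.toReal_ofReal hα0.le] at h1
    simp only [Real.norm_eq_abs] at h1
    rwa [show ENNReal.ofReal (2/α) = 2 / ENNReal.ofReal α by
      rw [ENNReal.ofReal_div_of_pos hα0, ENNReal.ofReal_ofNat]]
  have hXαint : Integrable (fun s => |x₁ s - x₂ s| ^ α)
      (volume.restrict (Set.Ioc (0:ℝ) 1)) := by
    refine hXα.integrable ?_
    exact ENNReal.one_le_ofReal.mpr ((one_le_div hα0).mpr (by linarith))
  have hαne : α ≠ 0 := ne_of_gt hα0
  have h2αne : (2:ℝ) - α ≠ 0 := by linarith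
  have key : ∫ s in Set.Ioc (0:ℝ) 1, |x₁ s - x₂ s| ^ α ≤
      (∫ s in Set.Ioc (0:ℝ) 1, (x₁ s - x₂ s) ^ 2) ^ (α/2) := by
    have hpq : Real.HolderConjugate (2/α) (2/(2-α)) :=
      Real.holderConjugate_iff.mpr ⟨(one_lt_div hα0).mpr (by linarith), by field_simp; ring⟩
    have hg1 : MemLp (fun _ : ℝ => (1:ℝ)) (ENNReal.ofReal (2/(2-α)))
        (volume.restrict (Set.Ioc (0:ℝ) 1)) := memLp_const 1
    have H := integral_mul_le_Lp_mul_Lq_of_nonneg hpq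
      (Filter.Eventually.of_forall fun s => Real.rpow_nonneg (abs_nonneg _) _)
      (Filter.Eventually.of_forall fun _ => zero_le_one) hXα hg1
    simp only [mul_one, Real.one_rpow] at H
    rw [integral_const, probReal_univ, one_smul, Real.one_rpow, mul_one] at H
    calc ∫ s in Set.Ioc (0:ℝ) 1, |x₁ s - x₂ s| ^ α
        ≤ (∫ s in Set.Ioc (0:ℝ) 1, (|x₁ s - x₂ s| ^ α) ^ (2/α)) ^ (1/(2/α)) := H
      _ = (∫ s in Set.Ioc (0:ℝ) 1, (x₁ s - x₂ s) ^ 2) ^ (α/2) := by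
          rw [one_div_div]
          congr 1
          refine integral_congr_ae (Filter.Eventually.of_forall fun s => ?_)
          show (|x₁ s - x₂ s| ^ α) ^ (2/α) = (x₁ s - x₂ s) ^ 2
          rw [← Real.rpow_mul (abs_nonneg _), show α * (2/α) = 2 by field_simp, habs2]
  have hhb : ∀ s ∈ Set.Icc (0:ℝ) 1,
      |h s| ≤ (∫ t in Set.Ioc (0:ℝ) 1, h' t ^ 2) ^ ((1:ℝ)/2) := fun s hs => by
    rw [hh s hs]; exact primitive_bound hh' hs
  have hkb : ∀ s ∈ Set.Icc (0:ℝ) 1,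
      |k s| ≤ (∫ t in Set.Ioc (0:ℝ) 1, k' t ^ 2) ^ ((1:ℝ)/2) := fun s hs => by
    rw [hk s hs]; exact primitive_bound hk' hs
  have aeb : ∀ᵐ s ∂(volume.restrict (Set.Ioc (0:ℝ) 1)),
      ‖(G (x₁ s) - G (x₂ s)) * h s * k s‖ ≤
        C * (∫ t in Set.Ioc (0:ℝ) 1, h' t ^ 2) ^ ((1:ℝ)/2) *
          (∫ t in Set.Ioc (0:ℝ) 1, k' t ^ 2) ^ ((1:ℝ)/2) * |x₁ s - x₂ s| ^ α := by
    filter_upwards [ae_restrict_mem measurableSet_Ioc] with s hs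
    have hs' : s ∈ Set.Icc (0:ℝ) 1 := Set.Ioc_subset_Icc_self hs
    rw [Real.norm_eq_abs, abs_mul, abs_mul]
    have hCx : 0 ≤ C * |x₁ s - x₂ s| ^ α :=
      mul_nonneg hC (Real.rpow_nonneg (abs_nonneg _) _)
    calc |G (x₁ s) - G (x₂ s)| * |h s| * |k s|
        ≤ (C * |x₁ s - x₂ s| ^ α) *
            ((∫ t in Set.Ioc (0:ℝ) 1, h' t ^ 2) ^ ((1:ℝ)/2)) *
            ((∫ t in Set.Ioc (0:ℝ) 1, k' t ^ 2) ^ ((1:ℝ)/2)) := by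
          exact mul_le_mul
            (mul_le_mul (hG _ _) (hhb s hs') (abs_nonneg _) hCx)
            (hkb s hs') (abs_nonneg _) (mul_nonneg hCx hHn0)
      _ = _ := by ring
  have Bint : Integrable (fun s =>
      C * (∫ t in Set.Ioc (0:ℝ) 1, h' t ^ 2) ^ ((1:ℝ)/2) *
        (∫ t in Set.Ioc (0:ℝ) 1, k' t ^ 2) ^ ((1:ℝ)/2) * |x₁ s - x₂ s| ^ α)
      (volume.restrict (Set.Ioc (0:ℝ) 1)) := hXαint.const_mul _
  simp only [intervalIntegral.integral_of_le zero_le_one, Real.sqrt_eq_rpow]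
  calc |∫ s in Set.Ioc (0:ℝ) 1, (G (x₁ s) - G (x₂ s)) * h s * k s|
      ≤ ∫ s in Set.Ioc (0:ℝ) 1,
          C * (∫ t in Set.Ioc (0:ℝ) 1, h' t ^ 2) ^ ((1:ℝ)/2) *
            (∫ t in Set.Ioc (0:ℝ) 1, k' t ^ 2) ^ ((1:ℝ)/2) * |x₁ s - x₂ s| ^ α := by
        rw [← Real.norm_eq_abs]
        exact norm_integral_le_of_norm_le Bint aeb
    _ = C * (∫ t in Set.Ioc (0:ℝ) 1, h' t ^ 2) ^ ((1:ℝ)/2) *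
          (∫ t in Set.Ioc (0:ℝ) 1, k' t ^ 2) ^ ((1:ℝ)/2) *
          ∫ s in Set.Ioc (0:ℝ) 1, |x₁ s - x₂ s| ^ α := integral_const_mul _ _
    _ ≤ C * (∫ t in Set.Ioc (0:ℝ) 1, h' t ^ 2) ^ ((1:ℝ)/2) *
          (∫ t in Set.Ioc (0:ℝ) 1, k' t ^ 2) ^ ((1:ℝ)/2) *
          (∫ s in Set.Ioc (0:ℝ) 1, (x₁ s - x₂ s) ^ 2) ^ (α/2) :=
        mul_le_mul_of_nonneg_left key (mul_nonneg (mul_nonneg hC hHn0) hKn0)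
    _ = C * (∫ t in Set.Ioc (0:ℝ) 1, h' t ^ 2) ^ ((1:ℝ)/2) *
          (∫ t in Set.Ioc (0:ℝ) 1, k' t ^ 2) ^ ((1:ℝ)/2) *
          ((∫ s in Set.Ioc (0:ℝ) 1, (x₁ s - x₂ s) ^ 2) ^ ((1:ℝ)/2)) ^ α := by
        rw [← Real.rpow_mul (integral_nonneg fun s => sq_nonneg _),
          show (1:ℝ)/2*α = α/2 by ring]
end
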